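/- arXiv:1712.02519 — 2 statements merged into one kernel-verified Lean document; each statement's English description precedes it below -/
import Mathlib

section
/- Let the parameter space be a product Θ = ∏_{j=1}^m Θ_j with 1 ≤ m ≤ ∞, and let S_MF = {Q : Q = ⊗_{j=1}^m Q_j} be the mean-field class. Suppose there exist Q̃ = ⊗_{j=1}^m Q̃_j ∈ S_MF, measurable subsets Θ̃_j ⊆ Θ_j, and constants C1, C2, C3 > 0 such that: (i) ⊗_{j=1}^m Θ̃_j ⊆ {θ : D(P_0⁽ⁿ⁾‖P_θ⁽ⁿ⁾) ≤ C1 n ε_n² and log (dQ̃/dΠ)(θ) ≤ C2 n ε_n²}; and (ii) −Σ_{j=1}^m log Q̃_j(Θ̃_j) ≤ C3 n ε_n². Then inf_{Q∈S_MF} R(Q) ≤ (C1 + C2 + C3) ε_n², where R(Q) = n⁻¹ ( D(Q‖Π) + ∫ D(P_0⁽ⁿ⁾‖P_θ⁽ⁿ⁾) dQ(θ) ). -/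
open MeasureTheory ProbabilityTheory Real
open scoped ENNReal NNReal

noncomputable section

open scoped Classical in
def KLdiv {Ω : Type*} [MeasurableSpace Ω] (P Q : Measure Ω) : ℝ≥0∞ :=
  if P ≪ Q ∧ Integrable (llr P Q) P then ENNReal.ofReal (∫ x, llr P Q x ∂P) else ⊤

/-- A probability measure on a product space belongs to the mean-field class iff the
coordinates are independent under it, i.e. it is a product of its marginals. -/
def isMeanField {ι : Type*} {Θj : ι → Type*} [∀ j, MeasurableSpace (Θj j)]
    (Q : Measure (∀ j, Θj j)) : Prop :=
  IsProbabilityMeasure Q ∧ iIndepFun (fun j θ => θ j) Q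

lemma iInf_antitone_tail {u : ℕ → ℝ≥0∞} (hu : Antitone u) (N : ℕ) :
    ⨅ n, u n = ⨅ n, u (n + N) :=
  le_antisymm (le_iInf fun k => iInf_le _ _)
    (le_iInf fun k => (iInf_le _ k).trans (hu (Nat.le_add_right k N)))

lemma iInf_eq_iInf_of_eventually {u v : ℕ → ℝ≥0∞} (hu : Antitone u) (hv : Antitone v)
    (N : ℕ) (h : ∀ n, N ≤ n → u n = v n) : ⨅ n, u n = ⨅ n, v n := by
  rw [iInf_antitone_tail hu N, iInf_antitone_tail hv N]
  exact iInf_congr fun n => h _ (Nat.le_add_left N n)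

/-- Theorem 2.5: a "distribution mass" condition controlling the mean-field variational
approximation error n * inf_{Q ∈ S_MF} R(Q). -/
theorem mean_field_variational_error_bound
    (ι 𝒳 : Type) [Countable ι] [Nonempty ι]
    (Θj : ι → Type) [∀ j, MeasurableSpace (Θj j)] [MeasurableSpace 𝒳]
    (C₁ C₂ C₃ : ℝ) (hC₁ : 0 < C₁) (hC₂ : 0 < C₂) (hC₃ : 0 < C₃)
    (n : ℕ) (εn : ℝ) (hεn : 0 < εn)
    (P₀ : Measure 𝒳) (P : (∀ j, Θj j) → Measure 𝒳) (prior : Measure (∀ j, Θj j))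
    (hP₀ : IsProbabilityMeasure P₀) (hprior : IsProbabilityMeasure prior)
    (hP : ∀ θ, IsProbabilityMeasure (P θ))
    -- Q̃ is a mean-field distribution, absolutely continuous w.r.t. the prior
    (Qt : Measure (∀ j, Θj j)) (hQt : isMeanField Qt) (hQtac : Qt ≪ prior)
    -- the blocks Θ̃_j
    (Θt : ∀ j, Set (Θj j)) (hΘtmeas : ∀ j, MeasurableSet (Θt j))
    -- condition (2.7): the product set sits inside a KL-neighborhood of the truth on
    -- which the density dQ̃/dΠ is controlled
    (hsub : {θ : ∀ j, Θj j | ∀ j, θ j ∈ Θt j} ⊆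
      {θ | KLdiv P₀ (P θ) ≤ ENNReal.ofReal (C₁ * n * εn ^ 2) ∧
           Real.log ((Qt.rnDeriv prior θ).toReal) ≤ C₂ * n * εn ^ 2})
    -- condition (2.8): -∑_j log Q̃_j(Θ̃_j) ≤ C₃ n εₙ²
    (hmasspos : ∀ j, 0 < (Qt.map (fun θ => θ j)) (Θt j))
    (hmass : ∑' j, ENNReal.ofReal (-Real.log (((Qt.map (fun θ => θ j)) (Θt j)).toReal))
      ≤ ENNReal.ofReal (C₃ * n * εn ^ 2)) :
    (⨅ Q ∈ {Q | isMeanField Q}, (KLdiv Q prior + ∫⁻ θ, KLdiv P₀ (P θ) ∂Q)) ≤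
      ENNReal.ofReal ((C₁ + C₂ + C₃) * n * εn ^ 2) := by
  classical
  obtain ⟨hQtprob, hQtind⟩ := hQt
  haveI := hQtprob
  set m : ∀ j, Measure (Θj j) := fun j => Qt.map (fun θ => θ j) with hm
  set t : ι → ℝ≥0∞ := fun j => m j (Θt j) with ht
  have hmeasf : ∀ j, Measurable (fun θ : ∀ j, Θj j => θ j) := fun j => measurable_pi_apply j
  haveI hmj : ∀ j, IsProbabilityMeasure (m j) :=
    fun j => Measure.isProbabilityMeasure_map (hmeasf j).aemeasurable
  have htle : ∀ j, t j ≤ 1 := fun j => prob_le_one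
  have htpos : ∀ j, 0 < t j := hmasspos
  have htne : ∀ j, t j ≠ ∞ := fun j => (lt_of_le_of_lt (htle j) ENNReal.one_lt_top).ne
  set K := C₃ * ↑n * εn ^ 2 with hK
  have hK0 : 0 ≤ K := by positivity
  -- the product set A
  set A : Set (∀ j, Θj j) := {θ | ∀ j, θ j ∈ Θt j} with hA
  have hAmeas : MeasurableSet A := by
    have : A = ⋂ j, (fun θ : ∀ j, Θj j => θ j) ⁻¹' Θt j := by
      ext θ; simp [hA]
    rw [this]
    exact MeasurableSet.iInter fun j => (hmeasf j) (hΘtmeas j)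
  -- finite-dimensional independence
  have hind : ∀ (S : Finset ι) (C : ∀ j, Set (Θj j)), (∀ j ∈ S, MeasurableSet (C j)) →
      Qt (⋂ j ∈ S, (fun θ : ∀ j, Θj j => θ j) ⁻¹' C j) = ∏ j ∈ S, m j (C j) := by
    intro S C hC
    rw [hQtind.measure_inter_preimage_eq_mul S hC]
    exact Finset.prod_congr rfl fun j hj => (Measure.map_apply (hmeasf j) (hC j hj)).symm
  -- enumeration of ι and the finite approximations of A
  obtain ⟨e, he⟩ := exists_surjective_nat ι
  set F : ℕ → Finset ι := fun k => (Finset.range k).image e with hF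
  have hFmono : Monotone F := fun a b hab =>
    Finset.image_subset_image (Finset.range_subset_range.mpr hab)
  set Bs : ℕ → Set (∀ j, Θj j) :=
    fun k => ⋂ j ∈ F k, (fun θ : ∀ j, Θj j => θ j) ⁻¹' Θt j with hBs
  have hBsmeas : ∀ k, MeasurableSet (Bs k) := fun k =>
    MeasurableSet.biInter (F k).countable_toSet fun j _ => (hmeasf j) (hΘtmeas j)
  have hBanti : Antitone Bs := by
    intro a b hab θ hθ
    simp only [hBs, Set.mem_iInter, Set.mem_preimage] at hθ ⊢
    exact fun j hj => hθ j (hFmono hab hj)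
  have hBsval : ∀ k, Qt (Bs k) = ∏ j ∈ F k, t j := fun k =>
    hind (F k) Θt (fun j _ => hΘtmeas j)
  -- exhaustion: S ⊆ F k eventually
  have hexh : ∀ S : Finset ι, ∃ N, ∀ k, N ≤ k → S ⊆ F k := by
    intro S
    refine ⟨(S.sup fun j => Function.invFun e j) + 1, fun k hk j hj => ?_⟩
    have h1 : e (Function.invFun e j) = j := Function.invFun_eq (he j)
    refine Finset.mem_image.mpr ⟨Function.invFun e j, Finset.mem_range.mpr ?_, h1⟩
    calc Function.invFun e j ≤ S.sup fun j => Function.invFun e j := Finset.le_sup hj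
      _ < k := hk
  -- continuity from above
  have hcont : ∀ E : Set (∀ j, Θj j), MeasurableSet E →
      Qt (E ∩ A) = ⨅ k, Qt (E ∩ Bs k) := by
    intro E hE
    have h1 : E ∩ A = ⋂ k, (E ∩ Bs k) := by
      rw [← Set.inter_iInter]
      congr 1
      refine Set.Subset.antisymm
        (fun θ hθ => Set.mem_iInter.mpr fun k => Set.mem_iInter₂.mpr fun j hj => hθ j) ?_
      intro θ hθ
      refine fun j => ?_
      obtain ⟨k, rfl⟩ := he j
      have h3 : θ ∈ Bs (k + 1) := Set.mem_iInter.mp hθ _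
      exact Set.mem_iInter₂.mp h3 (e k)
        (Finset.mem_image.mpr ⟨k, Finset.mem_range.mpr k.lt_succ_self, rfl⟩)
    rw [h1]
    refine Directed.measure_iInter (fun k => ((hE.inter (hBsmeas k))).nullMeasurableSet) ?_
      ⟨0, measure_ne_top _ _⟩
    intro a b
    exact ⟨max a b, Set.inter_subset_inter_right _ (hBanti (le_max_left a b)),
      Set.inter_subset_inter_right _ (hBanti (le_max_right a b))⟩
  have hQAiInf : Qt A = ⨅ k, Qt (Bs k) := by
    have := hcont Set.univ MeasurableSet.univ
    simpa using this
  -- lower bound on finite products of the masses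
  have htleR : ∀ j, (t j).toReal ≤ 1 := by
    intro j
    have := ENNReal.toReal_mono ENNReal.one_ne_top (htle j)
    simpa using this
  have htposR : ∀ j, 0 < (t j).toReal := fun j => ENNReal.toReal_pos (htpos j).ne' (htne j)
  have hprod_ge : ∀ S : Finset ι, ENNReal.ofReal (Real.exp (-K)) ≤ ∏ j ∈ S, t j := by
    intro S
    have h1 : ∀ j ∈ S, t j = ENNReal.ofReal (Real.exp (Real.log (t j).toReal)) := by
      intro j hj
      rw [Real.exp_log (htposR j), ENNReal.ofReal_toReal (htne j)]
    rw [Finset.prod_congr rfl h1, ← ENNReal.ofReal_prod_of_nonneg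
      (fun i _ => (Real.exp_pos _).le), ← Real.exp_sum]
    apply ENNReal.ofReal_le_ofReal
    apply Real.exp_le_exp.mpr
    have h2 : ∑ j ∈ S, -Real.log (t j).toReal ≤ K := by
      have h3 : ∑ j ∈ S, ENNReal.ofReal (-Real.log (t j).toReal) ≤ ENNReal.ofReal K :=
        le_trans (ENNReal.sum_le_tsum S) hmass
      rw [← ENNReal.ofReal_sum_of_nonneg
        (fun j _ => neg_nonneg.2 (Real.log_nonpos ENNReal.toReal_nonneg (htleR j)))] at h3
      exact (ENNReal.ofReal_le_ofReal_iff hK0).mp h3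
    have h4 : ∑ j ∈ S, -Real.log (t j).toReal = -∑ j ∈ S, Real.log (t j).toReal := by
      simp [Finset.sum_neg_distrib]
    linarith [h2, h4.symm.le]
  have hQAge : ENNReal.ofReal (Real.exp (-K)) ≤ Qt A := by
    rw [hQAiInf]
    exact le_iInf fun k => (hprod_ge (F k)).trans_eq (hBsval k).symm
  have hQApos : Qt A ≠ 0 := by
    intro h
    rw [h, le_zero_iff, ENNReal.ofReal_eq_zero] at hQAge
    exact absurd hQAge (not_le.mpr (Real.exp_pos _))
  have hQAne : Qt A ≠ ∞ := measure_ne_top _ _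
  have hQAReal : Real.exp (-K) ≤ (Qt A).toReal := by
    have := ENNReal.toReal_mono hQAne hQAge
    rwa [ENNReal.toReal_ofReal (Real.exp_pos _).le] at this
  have hQARealpos : 0 < (Qt A).toReal := lt_of_lt_of_le (Real.exp_pos _) hQAReal
  have hlogQA : -Real.log (Qt A).toReal ≤ K := by
    have := Real.log_le_log (Real.exp_pos _) hQAReal
    rw [Real.log_exp] at this
    linarith
  -- the key product identity
  have keyL : ∀ (S : Finset ι) (C : ∀ j, Set (Θj j)), (∀ j ∈ S, MeasurableSet (C j)) →
      Qt ((⋂ j ∈ S, (fun θ : ∀ j, Θj j => θ j) ⁻¹' (C j ∩ Θt j)) ∩ A) * ∏ j ∈ S, t j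
        = (∏ j ∈ S, m j (C j ∩ Θt j)) * Qt A := by
    intro S C hC
    set E := ⋂ j ∈ S, (fun θ : ∀ j, Θj j => θ j) ⁻¹' (C j ∩ Θt j) with hE
    have hEmeas : MeasurableSet E :=
      MeasurableSet.biInter S.countable_toSet fun j hj =>
        (hmeasf j) ((hC j hj).inter (hΘtmeas j))
    obtain ⟨N, hN⟩ := hexh S
    have hcT : (∏ j ∈ S, t j) ≠ ∞ := ENNReal.prod_ne_top fun j _ => htne j
    have haT : (∏ j ∈ S, m j (C j ∩ Θt j)) ≠ ∞ :=
      ENNReal.prod_ne_top fun j _ => measure_ne_top _ _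
    have hu : Antitone (fun k => Qt (E ∩ Bs k) * ∏ j ∈ S, t j) := fun a b hab =>
      mul_le_mul_left (measure_mono (Set.inter_subset_inter_right _ (hBanti hab))) _
    have hv : Antitone (fun k => (∏ j ∈ S, m j (C j ∩ Θt j)) * Qt (Bs k)) := fun a b hab =>
      mul_le_mul_right (measure_mono (hBanti hab)) _
    have heqn : ∀ k, N ≤ k →
        Qt (E ∩ Bs k) * ∏ j ∈ S, t j = (∏ j ∈ S, m j (C j ∩ Θt j)) * Qt (Bs k) := by
      intro k hk
      have hSF := hN k hk
      set D : ∀ j, Set (Θj j) := fun j => if j ∈ S then C j ∩ Θt j else Θt j with hD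
      have hset : E ∩ Bs k = ⋂ j ∈ F k, (fun θ : ∀ j, Θj j => θ j) ⁻¹' D j := by
        ext θ
        simp only [hE, hBs, Set.mem_inter_iff, Set.mem_iInter, Set.mem_preimage]
        constructor
        · rintro ⟨h1, h2⟩ j hj
          by_cases hjS : j ∈ S
          · simpa [hD, hjS] using h1 j hjS
          · simpa [hD, hjS] using h2 j hj
        · intro h
          refine ⟨fun j hj => ?_, fun j hj => ?_⟩
          · have := h j (hSF hj); simpa [hD, hj] using this
          · have := h j hj
            by_cases hjS : j ∈ S
            · exact (by simpa [hD, hjS] using this : θ j ∈ C j ∩ Θt j).2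
            · simpa [hD, hjS] using this
      have hDmeas : ∀ j ∈ F k, MeasurableSet (D j) := by
        intro j hj
        by_cases hjS : j ∈ S
        · simpa [hD, hjS] using (hC j hjS).inter (hΘtmeas j)
        · simpa [hD, hjS] using hΘtmeas j
      rw [hset, hind (F k) D hDmeas, hBsval k]
      rw [← Finset.prod_sdiff hSF (f := fun j => m j (D j)),
        ← Finset.prod_sdiff hSF (f := t)]
      have e1 : ∏ j ∈ F k \ S, m j (D j) = ∏ j ∈ F k \ S, t j := by
        refine Finset.prod_congr rfl fun j hj => ?_
        have : j ∉ S := (Finset.mem_sdiff.mp hj).2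
        simp [hD, this, ht]
      have e2 : ∏ j ∈ S, m j (D j) = ∏ j ∈ S, m j (C j ∩ Θt j) := by
        refine Finset.prod_congr rfl fun j hj => ?_
        simp [hD, hj]
      rw [e1, e2]
      ring
    calc Qt (E ∩ A) * ∏ j ∈ S, t j
        = (⨅ k, Qt (E ∩ Bs k)) * ∏ j ∈ S, t j := by rw [hcont E hEmeas]
      _ = ⨅ k, Qt (E ∩ Bs k) * ∏ j ∈ S, t j :=
          ENNReal.iInf_mul (fun h => absurd h hcT)
      _ = ⨅ k, (∏ j ∈ S, m j (C j ∩ Θt j)) * Qt (Bs k) :=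
          iInf_eq_iInf_of_eventually hu hv N heqn
      _ = (∏ j ∈ S, m j (C j ∩ Θt j)) * ⨅ k, Qt (Bs k) :=
          (ENNReal.mul_iInf (fun h => absurd h haT)).symm
      _ = (∏ j ∈ S, m j (C j ∩ Θt j)) * Qt A := by rw [← hQAiInf]
  -- the candidate measure Q
  set Q : Measure (∀ j, Θj j) := (Qt A)⁻¹ • Qt.restrict A with hQdef
  have hQapp : ∀ E : Set (∀ j, Θj j), MeasurableSet E → Q E = (Qt A)⁻¹ * Qt (E ∩ A) := by
    intro E hE
    rw [hQdef, Measure.smul_apply, Measure.restrict_apply hE, smul_eq_mul]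
  haveI hQprob : IsProbabilityMeasure Q := by
    constructor
    rw [hQapp Set.univ MeasurableSet.univ, Set.univ_inter]
    exact ENNReal.inv_mul_cancel hQApos hQAne
  -- intersecting with A only sees the trace on Θt
  have hinterA : ∀ (S : Finset ι) (C : ∀ j, Set (Θj j)),
      (⋂ j ∈ S, (fun θ : ∀ j, Θj j => θ j) ⁻¹' C j) ∩ A
        = (⋂ j ∈ S, (fun θ : ∀ j, Θj j => θ j) ⁻¹' (C j ∩ Θt j)) ∩ A := by
    intro S C
    ext θ
    simp only [Set.mem_inter_iff, Set.mem_iInter, Set.mem_preimage, hA, Set.mem_setOf_eq,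
      Set.mem_inter_iff]
    constructor
    · rintro ⟨h1, h2⟩
      exact ⟨fun j hj => ⟨h1 j hj, h2 j⟩, h2⟩
    · rintro ⟨h1, h2⟩
      exact ⟨fun j hj => (h1 j hj).1, h2⟩
  -- the general mass formula for Q
  have hQmass : ∀ (S : Finset ι) (C : ∀ j, Set (Θj j)), (∀ j ∈ S, MeasurableSet (C j)) →
      Q (⋂ j ∈ S, (fun θ : ∀ j, Θj j => θ j) ⁻¹' C j) * ∏ j ∈ S, t j
        = ∏ j ∈ S, m j (C j ∩ Θt j) := by
    intro S C hC
    have hmeasE : MeasurableSet (⋂ j ∈ S, (fun θ : ∀ j, Θj j => θ j) ⁻¹' C j) :=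
      MeasurableSet.biInter S.countable_toSet fun j hj => (hmeasf j) (hC j hj)
    rw [hQapp _ hmeasE, hinterA S C, mul_assoc, keyL S C hC]
    rw [mul_comm (∏ j ∈ S, m j (C j ∩ Θt j)) (Qt A), ← mul_assoc,
      ENNReal.inv_mul_cancel hQApos hQAne, one_mul]
  -- the single-coordinate mass formula
  have hQsingle : ∀ (j : ι) (B : Set (Θj j)), MeasurableSet B →
      Q ((fun θ : ∀ j, Θj j => θ j) ⁻¹' B) * t j = m j (B ∩ Θt j) := by
    intro j B hB
    have := hQmass {j} (Function.update (fun k => (Set.univ : Set (Θj k))) j B) ?_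
    · simpa [Function.update_self] using this
    · intro k hk
      rw [Finset.mem_singleton] at hk
      subst hk
      simpa [Function.update_self] using hB
  -- Q is mean-field
  have hQind : iIndepFun (fun (j : ι) (θ : ∀ j, Θj j) => θ j) Q := by
    rw [iIndepFun_iff_measure_inter_preimage_eq_mul]
    intro S sets hsets
    have hc0 : (∏ j ∈ S, t j) ≠ 0 := by
      rw [Finset.prod_ne_zero_iff]
      exact fun j _ => (htpos j).ne'
    have hcT : (∏ j ∈ S, t j) ≠ ∞ := ENNReal.prod_ne_top fun j _ => htne j
    refine (ENNReal.mul_right_inj hc0 hcT).mp ?_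
    calc (∏ j ∈ S, t j) * Q (⋂ j ∈ S, (fun θ : ∀ j, Θj j => θ j) ⁻¹' sets j)
        = Q (⋂ j ∈ S, (fun θ : ∀ j, Θj j => θ j) ⁻¹' sets j) * ∏ j ∈ S, t j := mul_comm _ _
      _ = ∏ j ∈ S, m j (sets j ∩ Θt j) := hQmass S sets hsets
      _ = ∏ j ∈ S, (t j * Q ((fun θ : ∀ j, Θj j => θ j) ⁻¹' sets j)) := by
          refine Finset.prod_congr rfl fun j hj => ?_
          rw [mul_comm, hQsingle j (sets j) (hsets j hj)]
      _ = (∏ j ∈ S, t j) * ∏ j ∈ S, Q ((fun θ : ∀ j, Θj j => θ j) ⁻¹' sets j) :=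
          Finset.prod_mul_distrib
  -- identification of the density of Q w.r.t. the prior
  set r0 := Qt.rnDeriv prior with hr0
  have hr0meas : Measurable r0 := Measure.measurable_rnDeriv _ _
  set dns : (∀ j, Θj j) → ℝ≥0∞ := (Qt A)⁻¹ • A.indicator r0 with hdns
  have hdnsmeas : Measurable dns := (hr0meas.indicator hAmeas).const_smul _
  have hQd : Q = prior.withDensity dns := by
    rw [hQdef]
    have h1 : Qt.restrict A = prior.withDensity (A.indicator r0) := by
      rw [withDensity_indicator hAmeas, ← restrict_withDensity hAmeas,
        Measure.withDensity_rnDeriv_eq Qt prior hQtac]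
    rw [h1, ← withDensity_smul _ (hr0meas.indicator hAmeas)]
  have hQac2 : Q ≪ prior := hQd ▸ withDensity_absolutelyContinuous prior dns
  have hdens : Q.rnDeriv prior =ᵐ[prior] dns := by
    rw [hQd]; exact Measure.rnDeriv_withDensity prior hdnsmeas
  have hdensQ : Q.rnDeriv prior =ᵐ[Q] dns := hQac2.ae_eq hdens
  have hQA1 : ∀ᵐ x ∂Q, x ∈ A := by
    rw [ae_iff]
    have h2 : {x | ¬ x ∈ A} = Aᶜ := rfl
    rw [h2, hQapp _ hAmeas.compl, Set.compl_inter_self, measure_empty, mul_zero]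
  have hr0fin : ∀ᵐ x ∂Q, r0 x < ∞ :=
    (Measure.rnDeriv_lt_top Qt prior).filter_mono hQac2.ae_le
  set CB : ℝ := C₂ * ↑n * εn ^ 2 + K with hCB
  have hCB0 : 0 ≤ CB := by rw [hCB, hK]; positivity
  have hkey : ∀ᵐ x ∂Q, llr Q prior x ≤ CB ∧
      -(((Q.rnDeriv prior x)⁻¹).toReal) ≤ llr Q prior x := by
    filter_upwards [hQA1, hdensQ, Measure.rnDeriv_pos hQac2, hr0fin] with x hxA hxd hxpos hxfin
    have hind1 : A.indicator r0 x = r0 x := Set.indicator_of_mem hxA _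
    have hxd' : Q.rnDeriv prior x = (Qt A)⁻¹ * r0 x := by
      rw [hxd, hdns]
      simp only [Pi.smul_apply, smul_eq_mul, hind1]
    have hr0ne : r0 x ≠ 0 := by
      intro h0
      rw [hxd', h0, mul_zero] at hxpos
      exact lt_irrefl _ hxpos
    have htoReal : (Q.rnDeriv prior x).toReal = ((Qt A).toReal)⁻¹ * (r0 x).toReal := by
      rw [hxd', ENNReal.toReal_mul, ENNReal.toReal_inv]
    have hr0pos : 0 < (r0 x).toReal := ENNReal.toReal_pos hr0ne hxfin.ne
    have hdpos : 0 < (Q.rnDeriv prior x).toReal := by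
      rw [htoReal]; positivity
    have hllr0 : llr Q prior x = Real.log (Q.rnDeriv prior x).toReal := rfl
    have hllr : llr Q prior x = -Real.log (Qt A).toReal + Real.log (r0 x).toReal := by
      rw [hllr0, htoReal, Real.log_mul (by positivity) hr0pos.ne', Real.log_inv]
    constructor
    · rw [hllr, hCB]
      have h5 := (hsub hxA).2
      have h6 : Real.log (r0 x).toReal ≤ C₂ * ↑n * εn ^ 2 := h5
      linarith [hlogQA]
    · have h6 : Real.log ((Q.rnDeriv prior x).toReal)⁻¹ ≤ ((Q.rnDeriv prior x).toReal)⁻¹ - 1 :=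
        Real.log_le_sub_one_of_pos (by positivity)
      rw [Real.log_inv] at h6
      have h7 : ((Q.rnDeriv prior x)⁻¹).toReal = ((Q.rnDeriv prior x).toReal)⁻¹ :=
        ENNReal.toReal_inv _
      rw [hllr0, h7]
      linarith
  -- integrability of the log-likelihood ratio
  have hdinvmeas : Measurable (fun x => (Q.rnDeriv prior x)⁻¹) :=
    (Measure.measurable_rnDeriv _ _).inv
  have hgint : Integrable (fun x => ((Q.rnDeriv prior x)⁻¹).toReal) Q := by
    refine integrable_toReal_of_lintegral_ne_top hdinvmeas.aemeasurable ?_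
    have heq2 : ∫⁻ x, (Q.rnDeriv prior x)⁻¹ ∂Q = ∫⁻ x, (dns x)⁻¹ ∂Q :=
      lintegral_congr_ae (hdensQ.mono fun x hx => by simp only [hx])
    have hle1 : ∫⁻ x, (Q.rnDeriv prior x)⁻¹ ∂Q ≤ 1 := by
      rw [heq2, hQd, lintegral_withDensity_eq_lintegral_mul _ hdnsmeas (g := fun x => (dns x)⁻¹) hdnsmeas.inv]
      calc ∫⁻ x, (dns * fun x => (dns x)⁻¹) x ∂prior
          ≤ ∫⁻ _, 1 ∂prior := lintegral_mono fun x => by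
            simpa [Pi.mul_apply] using ENNReal.mul_inv_le_one (dns x)
        _ = 1 := by simp
    exact ne_top_of_le_ne_top ENNReal.one_ne_top hle1
  have hintllr : Integrable (llr Q prior) Q := by
    refine Integrable.mono' ((integrable_const CB).add hgint)
      (measurable_llr _ _).aestronglyMeasurable ?_
    filter_upwards [hkey] with x hx
    simp only [Pi.add_apply, Real.norm_eq_abs]
    rw [abs_le]
    have h12 : (0:ℝ) ≤ ((Q.rnDeriv prior x)⁻¹).toReal := ENNReal.toReal_nonneg
    exact ⟨by linarith [hx.2], by linarith [hx.1]⟩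
  have hintegral : ∫ x, llr Q prior x ∂Q ≤ CB := by
    have h9 := integral_mono_ae hintllr (integrable_const CB) (hkey.mono fun x hx => hx.1)
    simpa using h9
  have hKL1 : KLdiv Q prior ≤ ENNReal.ofReal CB := by
    unfold KLdiv
    rw [if_pos ⟨hQac2, hintllr⟩]
    exact ENNReal.ofReal_le_ofReal hintegral
  -- the expected KL term
  have hKL2 : ∫⁻ θ, KLdiv P₀ (P θ) ∂Q ≤ ENNReal.ofReal (C₁ * ↑n * εn ^ 2) := by
    rw [hQdef, lintegral_smul_measure]
    have h10 : ∫⁻ θ, KLdiv P₀ (P θ) ∂(Qt.restrict A)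
        ≤ ENNReal.ofReal (C₁ * ↑n * εn ^ 2) * Qt A := by
      have h11 : ∀ᵐ θ ∂(Qt.restrict A), KLdiv P₀ (P θ) ≤ ENNReal.ofReal (C₁ * ↑n * εn ^ 2) := by
        rw [ae_restrict_iff' hAmeas]
        exact ae_of_all _ fun θ hθ => (hsub hθ).1
      calc ∫⁻ θ, KLdiv P₀ (P θ) ∂(Qt.restrict A)
          ≤ ∫⁻ _, ENNReal.ofReal (C₁ * ↑n * εn ^ 2) ∂(Qt.restrict A) := lintegral_mono_ae h11
        _ = ENNReal.ofReal (C₁ * ↑n * εn ^ 2) * Qt A := by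
            rw [lintegral_const, Measure.restrict_apply_univ]
    calc (Qt A)⁻¹ * ∫⁻ θ, KLdiv P₀ (P θ) ∂(Qt.restrict A)
        ≤ (Qt A)⁻¹ * (ENNReal.ofReal (C₁ * ↑n * εn ^ 2) * Qt A) := mul_le_mul_right h10 _
      _ = ENNReal.ofReal (C₁ * ↑n * εn ^ 2) := by
          rw [mul_comm (ENNReal.ofReal _) (Qt A), ← mul_assoc,
            ENNReal.inv_mul_cancel hQApos hQAne, one_mul]
  -- conclusion
  refine le_trans (iInf₂_le Q ⟨hQprob, hQind⟩) ?_
  calc KLdiv Q prior + ∫⁻ θ, KLdiv P₀ (P θ) ∂Q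
      ≤ ENNReal.ofReal CB + ENNReal.ofReal (C₁ * ↑n * εn ^ 2) := add_le_add hKL1 hKL2
    _ = ENNReal.ofReal ((C₁ + C₂ + C₃) * ↑n * εn ^ 2) := by
        rw [← ENNReal.ofReal_add hCB0 (by positivity)]
        congr 1
        rw [hCB, hK]; ring

end
end

section
/- In the Gaussian sequence model with the sieve prior, define the class S_EB = {Q : dQ = ∏_{j=1}^k dQ_j(θ_j) ∏_{j>k} δ_0(θ_j) dθ_j for some positive integer k, with each Q_j absolutely continuous with respect to Lebesgue measure}. Then the empirical Bayes posterior Q̂_EB — the product measure with coordinates q_j = f̃_j for j ≤ k̂ and q_j = δ_0 for j > k̂, where f̃_j(θ_j) ∝ f_j(θ_j) exp(−n(θ_j − Y_j)²/2) and k̂ = argmax_k π(k|Y) — minimizes the Kullback–Leibler divergence D(Q‖Π(·|Y)) over Q ∈ S_EB; that is, Q̂_EB is exactly the variational posterior with respect to the class S_EB. -/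
open MeasureTheory ProbabilityTheory Real
open scoped ENNReal NNReal

noncomputable section

def posterior {Θ 𝒳 : Type*} [MeasurableSpace Θ] [MeasurableSpace 𝒳]
    (prior : Measure Θ) (p : Θ → 𝒳 → ℝ≥0∞) (X : 𝒳) : Measure Θ :=
  (∫⁻ θ, p θ X ∂prior)⁻¹ • prior.withDensity (fun θ => p θ X)

/-- extension of a finite-dimensional vector by zeros -/
def extendFin (k : ℕ) (x : Fin k → ℝ) : ℕ → ℝ := fun i => if h : i < k then x ⟨i, h⟩ else 0

/-- the sieve prior: sample k ~ π, θ_j ~ f_j for j ≤ k, θ_j = 0 for j > k -/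
def sievePrior (π' : ℕ → ℝ≥0∞) (f : ℕ → ℝ → ℝ) : Measure (ℕ → ℝ) :=
  Measure.sum fun k => π' k •
    Measure.map (extendFin k)
      (Measure.pi fun j : Fin k => volume.withDensity fun x => ENNReal.ofReal (f (j : ℕ) x))

/-- likelihood ratio dP_θ⁽ⁿ⁾/dP_0⁽ⁿ⁾ of the Gaussian sequence model -/
def gaussLik (n : ℕ) (θ Y : ℕ → ℝ) : ℝ≥0∞ :=
  ENNReal.ofReal (Real.exp ((n : ℝ) * ∑' j, θ j * Y j - (n : ℝ) / 2 * ∑' j, θ j ^ 2))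

/-- posterior of the Gaussian sequence model with a sieve prior -/
def gaussPosterior (n : ℕ) (π' : ℕ → ℝ≥0∞) (f : ℕ → ℝ → ℝ) (Y : ℕ → ℝ) :
    Measure (ℕ → ℝ) :=
  posterior (sievePrior π' f) (gaussLik n) Y

/-- mean-field class: probability measures under which all coordinates are independent -/
def isMeanFieldSeq (Q : Measure (ℕ → ℝ)) : Prop :=
  IsProbabilityMeasure Q ∧
    iIndepFun (fun j (y : ℕ → ℝ) => y j) Q

/-- Sobolev ball Θ_α(B) (coordinates are 0-indexed: θ i is the (i+1)-st coordinate) -/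
def sobolevBall (α B : ℝ) : Set (ℕ → ℝ) :=
  {θ | ∑' j : ℕ, ((j : ℝ) + 1) ^ (2 * α) * θ j ^ 2 ≤ B ^ 2}

/-- P is the Gaussian sequence model P_θ⁽ⁿ⁾ = ⊗_j N(θ_j, 1/n) -/
def isGaussianSeqModel (n : ℕ) (θ : ℕ → ℝ) (P : Measure (ℕ → ℝ)) : Prop :=
  IsProbabilityMeasure P ∧
    iIndepFun (fun j (y : ℕ → ℝ) => y j) P ∧
    ∀ j, P.map (fun y => y j) = gaussianReal (θ j) ((n : ℝ≥0))⁻¹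

/-- k₀ = ⌈(n / log n)^{1/(2α+1)}⌉ -/
def k0def (α : ℝ) (n : ℕ) : ℕ := ⌈((n : ℝ) / Real.log n) ^ (1 / (2 * α + 1))⌉₊

/-- Qhat is a mean-field variational posterior for the Gaussian sequence model -/
def isMFVarPosterior (n : ℕ) (π' : ℕ → ℝ≥0∞) (f : ℕ → ℝ → ℝ)
    (Qhat : (ℕ → ℝ) → Measure (ℕ → ℝ)) : Prop :=
  ∀ Y, isMeanFieldSeq (Qhat Y) ∧ ∀ Q, isMeanFieldSeq Q →
    KLdiv (Qhat Y) (gaussPosterior n π' f Y) ≤ KLdiv Q (gaussPosterior n π' f Y)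


/-- normalizing constant W_j = ∫ f_j(x) exp(-n(x - Y_j)²/2) dx -/
def Wnorm (n : ℕ) (f : ℕ → ℝ → ℝ) (Y : ℕ → ℝ) (j : ℕ) : ℝ≥0∞ :=
  ∫⁻ x, ENNReal.ofReal (f j x * Real.exp (-(n : ℝ) / 2 * (x - Y j) ^ 2))

/-- the coordinatewise posterior f̃_j(θ_j) ∝ f_j(θ_j) exp(-n(θ_j - Y_j)²/2) -/
def tildeF (n : ℕ) (f : ℕ → ℝ → ℝ) (Y : ℕ → ℝ) (j : ℕ) : Measure ℝ :=
  (Wnorm n f Y j)⁻¹ •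
    volume.withDensity fun x =>
      ENNReal.ofReal (f j x * Real.exp (-(n : ℝ) / 2 * (x - Y j) ^ 2))

/-- unnormalized posterior weight of the model dimension k,
π(k) ∏_{j≤k} ∫ f_j(θ) exp(-n(θ-Y_j)²/2) dθ ∏_{j≤k} exp(n Y_j²/2); the common factor
∏_{j} exp(-n Y_j²/2) of the Bayes formula has been divided out. -/
def dimWeight (n : ℕ) (π' : ℕ → ℝ≥0∞) (f : ℕ → ℝ → ℝ) (Y : ℕ → ℝ) (k : ℕ) : ℝ≥0∞ :=
  π' k * ∏ j ∈ Finset.range k,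
    (Wnorm n f Y j * ENNReal.ofReal (Real.exp ((n : ℝ) * Y j ^ 2 / 2)))

/-- π(k|Y), the posterior probability of the model dimension -/
def dimPost (n : ℕ) (π' : ℕ → ℝ≥0∞) (f : ℕ → ℝ → ℝ) (Y : ℕ → ℝ) (k : ℕ) : ℝ≥0∞ :=
  dimWeight n π' f Y k / ∑' m, dimWeight n π' f Y m

/-- the class S_EB: product measures with finitely many absolutely continuous
coordinates followed by Dirac masses at zero -/
def inSEB (Q : Measure (ℕ → ℝ)) : Prop :=
  ∃ (k : ℕ) (ν : Fin k → Measure ℝ),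
    (∀ i, IsProbabilityMeasure (ν i)) ∧ (∀ i, ν i ≪ volume) ∧
    Q = Measure.map (extendFin k) (Measure.pi ν)

section AuxGeneral
variable {Ω : Type*} [MeasurableSpace Ω]

lemma lintegral_pi_prod : ∀ {k : ℕ} (ν : Fin k → Measure ℝ), (∀ i, SigmaFinite (ν i)) →
    ∀ (h : Fin k → ℝ → ℝ≥0∞), (∀ i, Measurable (h i)) →
    ∫⁻ x, ∏ i, h i (x i) ∂Measure.pi ν = ∏ i, ∫⁻ y, h i y ∂ν i := by
  intro k
  induction k with
  | zero =>
    intro ν _ h _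
    simp
  | succ K IH =>
    intro ν hν h hm
    haveI := hν
    have hmp := measurePreserving_piFinSuccAbove ν 0
    set e := MeasurableEquiv.piFinSuccAbove (fun _ : Fin (K+1) => ℝ) 0 with he
    have hG : Measurable (fun p : ℝ × (Fin K → ℝ) =>
        h 0 p.1 * ∏ j : Fin K, h ((0 : Fin (K+1)).succAbove j) (p.2 j)) := by
      apply Measurable.mul
      · exact (hm 0).comp measurable_fst
      · apply Finset.measurable_prod
        intro j _
        exact (hm _).comp ((measurable_pi_apply j).comp measurable_snd)
    have key := hmp.lintegral_comp hG
    have hcomp : ∀ x : Fin (K+1) → ℝ,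
        (fun p : ℝ × (Fin K → ℝ) =>
          h 0 p.1 * ∏ j : Fin K, h ((0 : Fin (K+1)).succAbove j) (p.2 j)) (e x)
        = ∏ i, h i (x i) := by
      intro x
      rw [Fin.prod_univ_succAbove (fun i => h i (x i)) 0]
      rfl
    calc ∫⁻ x, ∏ i, h i (x i) ∂Measure.pi ν
        = ∫⁻ x, (fun p : ℝ × (Fin K → ℝ) =>
            h 0 p.1 * ∏ j : Fin K, h ((0 : Fin (K+1)).succAbove j) (p.2 j)) (e x)
            ∂Measure.pi ν := by
          apply lintegral_congr
          intro x
          rw [hcomp]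
      _ = ∫⁻ p, h 0 p.1 * ∏ j : Fin K, h ((0 : Fin (K+1)).succAbove j) (p.2 j)
            ∂((ν 0).prod (Measure.pi fun j => ν ((0 : Fin (K+1)).succAbove j))) := key
      _ = (∫⁻ y, h 0 y ∂ν 0) * ∏ j : Fin K, ∫⁻ y, h ((0 : Fin (K+1)).succAbove j) y
            ∂ν ((0 : Fin (K+1)).succAbove j) := by
          rw [lintegral_prod_mul (f := h 0)
            (g := fun z : Fin K → ℝ => ∏ j : Fin K, h ((0 : Fin (K+1)).succAbove j) (z j))
            (hm 0).aemeasurable ((Finset.measurable_prod _ fun j _ =>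
              (hm _).comp (measurable_pi_apply j)).aemeasurable)]
          congr 1
          exact IH _ (fun j => hν _) _ (fun j => hm _)
      _ = ∏ i, ∫⁻ y, h i y ∂ν i := (Fin.prod_univ_succAbove (fun i => ∫⁻ y, h i y ∂ν i) 0).symm

lemma pi_withDensity {k : ℕ} (ν : Fin k → Measure ℝ) [∀ i, SigmaFinite (ν i)]
    (g : Fin k → ℝ → ℝ≥0∞) (hg : ∀ i, Measurable (g i))
    (hfin : ∀ i, SigmaFinite ((ν i).withDensity (g i))) :
    (Measure.pi ν).withDensity (fun x => ∏ i, g i (x i)) =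
      Measure.pi (fun i => (ν i).withDensity (g i)) := by
  haveI := hfin
  refine (Measure.pi_eq (μ := fun i => (ν i).withDensity (g i)) fun s hs => ?_).symm
  rw [withDensity_apply _ (MeasurableSet.univ_pi hs)]
  have hbox : MeasurableSet (Set.pi Set.univ s) := MeasurableSet.univ_pi hs
  rw [← lintegral_indicator hbox]
  have : (Set.pi Set.univ s).indicator (fun x => ∏ i, g i (x i)) =
      fun x => ∏ i, (s i).indicator (g i) (x i) := by
    funext x
    by_cases hx : x ∈ Set.pi Set.univ s
    · rw [Set.indicator_of_mem hx]
      exact Finset.prod_congr rfl fun i _ =>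
        (Set.indicator_of_mem (hx i (Set.mem_univ i)) _).symm
    · rw [Set.indicator_of_notMem hx]
      have hx' : ∃ i, x i ∉ s i := by
        by_contra hcon
        push_neg at hcon
        exact hx fun i _ => hcon i
      obtain ⟨i, hi⟩ := hx'
      exact (Finset.prod_eq_zero (Finset.mem_univ i)
        (by rw [Set.indicator_of_notMem hi])).symm
  rw [this, lintegral_pi_prod ν (fun i => inferInstance) _ (fun i => (hg i).indicator (hs i))]
  exact Finset.prod_congr rfl fun i _ => by
    rw [lintegral_indicator (hs i), withDensity_apply _ (hs i)]




lemma map_withDensity' {α β : Type*} [MeasurableSpace α] [MeasurableSpace β]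
    (μ : Measure α) {g : α → β} (hg : Measurable g) {f : β → ℝ≥0∞} (hf : Measurable f) :
    (Measure.map g μ).withDensity f = Measure.map g (μ.withDensity (fun x => f (g x))) := by
  ext A hA
  rw [withDensity_apply _ hA, Measure.map_apply hg hA,
    withDensity_apply _ (hg hA), setLIntegral_map hA hf hg]

lemma pi_smul' {k : ℕ} (c : Fin k → ℝ≥0∞) (ν : Fin k → Measure ℝ)
    [hνf : ∀ i, IsFiniteMeasure (ν i)] (hc : ∀ i, c i ≠ ∞) :
    Measure.pi (fun i => c i • ν i) = (∏ i, c i) • Measure.pi ν := by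
  haveI hfin : ∀ i, IsFiniteMeasure (c i • ν i) := fun i => by
    refine ⟨?_⟩
    rw [Measure.smul_apply, smul_eq_mul]
    exact ENNReal.mul_lt_top (hc i).lt_top (measure_lt_top _ _)
  haveI : ∀ i, SigmaFinite ((fun i => c i • ν i) i) := fun i =>
    @IsFiniteMeasure.toSigmaFinite _ _ (c i • ν i) (hfin i)
  haveI : ∀ i, SigmaFinite (ν i) := fun i =>
    @IsFiniteMeasure.toSigmaFinite _ _ (ν i) (hνf i)
  refine (Measure.pi_eq (μ := fun i => c i • ν i) fun s hs => ?_)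
  rw [Measure.smul_apply, Measure.pi_pi, smul_eq_mul, ← Finset.prod_mul_distrib]
  exact Finset.prod_congr rfl fun i _ => rfl

lemma measure_sum_eq_single {μ : ℕ → Measure Ω} (k : ℕ) (h : ∀ m, m ≠ k → μ m = 0) :
    Measure.sum μ = μ k := by
  ext A hA
  rw [Measure.sum_apply _ hA]
  exact tsum_eq_single k fun m hm => by rw [h m hm]; rfl

lemma restrict_sum' (μ : ℕ → Measure Ω) {s : Set Ω} (hs : MeasurableSet s) :
    (Measure.sum μ).restrict s = Measure.sum (fun i => (μ i).restrict s) := by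
  ext A hA
  rw [Measure.restrict_apply hA, Measure.sum_apply _ hA, Measure.sum_apply _ (hA.inter hs)]
  exact tsum_congr fun i => (Measure.restrict_apply hA).symm

/-- absolute continuity w.r.t. a restriction -/
lemma ac_restrict_iff {P ρ : Measure Ω} {S : Set Ω} (hS : MeasurableSet S)
    (hP : P Sᶜ = 0) : P ≪ ρ ↔ P ≪ ρ.restrict S := by
  constructor
  · intro h A hA
    rw [Measure.restrict_apply' hS] at hA
    have h1 : P (A ∩ S) = 0 := h hA
    have h2 : P (A \ S) = 0 :=
      le_antisymm ((measure_mono (fun x hx => hx.2)).trans hP.le) zero_le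
    rw [← measure_inter_add_diff A hS, h1, h2, add_zero]
  · intro h
    exact h.trans (Measure.absolutelyContinuous_of_le Measure.restrict_le_self)



lemma rnDeriv_restrict_ae (P ρ : Measure Ω) [IsFiniteMeasure P] [SigmaFinite ρ]
    {S : Set Ω} (hS : MeasurableSet S) (hP : P Sᶜ = 0) (hac : P ≪ ρ) :
    P.rnDeriv ρ =ᵐ[P] P.rnDeriv (ρ.restrict S) := by
  have hac' : P ≪ ρ.restrict S := (ac_restrict_iff hS hP).mp hac
  have hrep : ρ.withDensity (P.rnDeriv ρ) = P := Measure.withDensity_rnDeriv_eq P ρ hac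
  have hrep' : P = (ρ.restrict S).withDensity (P.rnDeriv ρ) := by
    ext A hA
    have h2 : P (A \ S) = 0 :=
      le_antisymm ((measure_mono (fun x hx => hx.2)).trans hP.le) zero_le
    calc P A = P (A ∩ S) := by rw [← measure_inter_add_diff A hS, h2, add_zero]
      _ = ρ.withDensity (P.rnDeriv ρ) (A ∩ S) := by rw [hrep]
      _ = ∫⁻ x in A ∩ S, P.rnDeriv ρ x ∂ρ := withDensity_apply _ (hA.inter hS)
      _ = (ρ.restrict S).withDensity (P.rnDeriv ρ) A := by
          rw [withDensity_apply _ hA, Measure.restrict_restrict hA]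
  have huniq : P.rnDeriv ρ =ᵐ[ρ.restrict S] P.rnDeriv (ρ.restrict S) :=
    Measure.eq_rnDeriv (ν := ρ.restrict S) (μ := P) (s := 0)
      (Measure.measurable_rnDeriv P ρ) Measure.MutuallySingular.zero_left
      (by rw [zero_add]; exact hrep')
  exact hac'.ae_le huniq

lemma KLdiv_congr_restrict (P ρ1 ρ2 : Measure Ω) [IsFiniteMeasure P] [SigmaFinite ρ1]
    [SigmaFinite ρ2] {S : Set Ω} (hS : MeasurableSet S) (hP : P Sᶜ = 0)
    (hres : ρ1.restrict S = ρ2.restrict S) :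
    KLdiv P ρ1 = KLdiv P ρ2 := by
  have hiff : P ≪ ρ1 ↔ P ≪ ρ2 := by
    rw [ac_restrict_iff hS hP, hres, ← ac_restrict_iff hS hP]
  by_cases hac : P ≪ ρ1
  · have hac2 : P ≪ ρ2 := hiff.mp hac
    have h1 := rnDeriv_restrict_ae P ρ1 hS hP hac
    have h2 := rnDeriv_restrict_ae P ρ2 hS hP hac2
    have hllr : llr P ρ1 =ᵐ[P] llr P ρ2 := by
      filter_upwards [h1, h2] with x hx1 hx2
      rw [llr, hx1, hres, llr, hx2]
    have hint : Integrable (llr P ρ1) P ↔ Integrable (llr P ρ2) P :=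
      ⟨fun h => h.congr hllr, fun h => h.congr hllr.symm⟩
    simp only [KLdiv]
    by_cases hI : Integrable (llr P ρ1) P
    · rw [if_pos ⟨hac, hI⟩, if_pos ⟨hac2, hint.mp hI⟩, integral_congr_ae hllr]
    · rw [if_neg (fun hc => hI hc.2), if_neg (fun hc => hI (hint.mpr hc.2))]
  · simp only [KLdiv]
    rw [if_neg (fun hc => hac hc.1), if_neg (fun hc => hac (hiff.mpr hc.1))]

open scoped Classical in
lemma KLdiv_smul_right (P μ : Measure Ω) [IsProbabilityMeasure P] [SigmaFinite μ]
    {c : ℝ≥0∞} (hc0 : c ≠ 0) (hct : c ≠ ⊤) :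
    KLdiv P (c • μ) = if P ≪ μ ∧ Integrable (llr P μ) P then
      ENNReal.ofReal ((∫ x, llr P μ x ∂P) - Real.log c.toReal) else ⊤ := by
  have hμc : μ ≪ c • μ := by
    intro A hA
    rw [Measure.smul_apply, smul_eq_mul] at hA
    exact (mul_eq_zero.mp hA).resolve_left hc0
  have hcμ : c • μ ≪ μ := by
    intro A hA
    rw [Measure.smul_apply, smul_eq_mul, hA, mul_zero]
  have hiff : P ≪ c • μ ↔ P ≪ μ := ⟨fun h => h.trans hcμ, fun h => h.trans hμc⟩
  by_cases hac : P ≪ μ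
  · have hllr : llr P (c • μ) =ᵐ[P] fun x => llr P μ x - Real.log c.toReal :=
      llr_smul_right hac c hc0 hct
    have hint : Integrable (llr P (c • μ)) P ↔ Integrable (llr P μ) P := by
      constructor
      · intro h
        have := (h.congr hllr).add (integrable_const (Real.log c.toReal))
        exact this.congr (Filter.Eventually.of_forall fun x => by simp)
      · intro h
        exact (h.sub (integrable_const (Real.log c.toReal))).congr hllr.symm
    simp only [KLdiv]
    by_cases hI : Integrable (llr P μ) P
    · rw [if_pos ⟨hiff.mpr hac, hint.mpr hI⟩, if_pos ⟨hac, hI⟩, integral_congr_ae hllr,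
        integral_sub hI (integrable_const _), integral_const]
      simp
    · rw [if_neg (fun hc => hI (hint.mp hc.2)), if_neg (fun hc => hI hc.2)]
  · simp only [KLdiv]
    rw [if_neg (fun hc => hac (hiff.mp hc.1)), if_neg (fun hc => hac hc.1)]

lemma integral_llr_nonneg' (P μ : Measure Ω) [IsProbabilityMeasure P] [IsProbabilityMeasure μ]
    (h : P ≪ μ) (hint : Integrable (llr P μ) P) : 0 ≤ ∫ x, llr P μ x ∂P := by
  have hexp : (fun x => exp (- llr P μ x)) =ᵐ[P] fun x => (μ.rnDeriv P x).toReal :=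
    exp_neg_llr h
  have hmeas : Measurable fun x => (μ.rnDeriv P x).toReal :=
    (Measure.measurable_rnDeriv μ P).ennreal_toReal
  have hlint : ∫⁻ x, ENNReal.ofReal ((μ.rnDeriv P x).toReal) ∂P ≤ 1 := by
    calc ∫⁻ x, ENNReal.ofReal ((μ.rnDeriv P x).toReal) ∂P
        ≤ ∫⁻ x, μ.rnDeriv P x ∂P := lintegral_mono fun x => ENNReal.ofReal_toReal_le
      _ ≤ μ Set.univ := Measure.lintegral_rnDeriv_le
      _ = 1 := measure_univ
  have hig : Integrable (fun x => (μ.rnDeriv P x).toReal) P := by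
    refine ⟨hmeas.aestronglyMeasurable, ?_⟩
    rw [hasFiniteIntegral_iff_ofReal (Filter.Eventually.of_forall fun x =>
      ENNReal.toReal_nonneg)]
    exact hlint.trans_lt ENNReal.one_lt_top
  have hie : Integrable (fun x => exp (- llr P μ x)) P := hig.congr hexp.symm
  have hmono : ∫ x, (1 - llr P μ x) ∂P ≤ ∫ x, exp (- llr P μ x) ∂P := by
    refine integral_mono ((integrable_const (1:ℝ)).sub hint) hie fun x => ?_
    have := Real.add_one_le_exp (- llr P μ x)
    simp only
    linarith
  have h1 : ∫ x, (1 - llr P μ x) ∂P = 1 - ∫ x, llr P μ x ∂P := by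
    rw [integral_sub (integrable_const 1) hint, integral_const]
    simp
  have h2 : ∫ x, exp (- llr P μ x) ∂P ≤ 1 := by
    rw [integral_congr_ae hexp]
    have heq : ∫ x, (μ.rnDeriv P x).toReal ∂P
        = (∫⁻ x, ENNReal.ofReal ((μ.rnDeriv P x).toReal) ∂P).toReal :=
      integral_eq_lintegral_of_nonneg_ae
        (Filter.Eventually.of_forall fun x => ENNReal.toReal_nonneg)
        hmeas.aestronglyMeasurable
    rw [heq]
    calc (∫⁻ x, ENNReal.ofReal ((μ.rnDeriv P x).toReal) ∂P).toReal
        ≤ (1 : ℝ≥0∞).toReal := ENNReal.toReal_mono ENNReal.one_ne_top hlint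
      _ = 1 := by simp
  linarith [h1 ▸ hmono, h2]

lemma KLdiv_smul_self (P : Measure Ω) [IsProbabilityMeasure P] {c : ℝ≥0∞}
    (hc0 : c ≠ 0) (hct : c ≠ ⊤) :
    KLdiv P (c • P) = ENNReal.ofReal (- Real.log c.toReal) := by
  have hz : llr P P =ᵐ[P] fun _ => (0:ℝ) := by
    filter_upwards [Measure.rnDeriv_self P] with x hx
    rw [llr, hx]
    simp
  rw [KLdiv_smul_right P P hc0 hct, if_pos ⟨Measure.AbsolutelyContinuous.rfl,
    (integrable_const (0:ℝ)).congr hz.symm⟩, integral_congr_ae hz]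
  simp

end AuxGeneral

section Model

variable (n : ℕ) (π' : ℕ → ℝ≥0∞) (f : ℕ → ℝ → ℝ) (Y : ℕ → ℝ)

lemma measurable_extendFin (k : ℕ) : Measurable (extendFin k) := by
  apply measurable_pi_lambda
  intro i
  unfold extendFin
  by_cases h : i < k
  · simpa [h] using measurable_pi_apply (⟨i, h⟩ : Fin k)
  · simpa [h] using measurable_const

lemma extendFin_of_le {k : ℕ} (x : Fin k → ℝ) {j : ℕ} (h : k ≤ j) :
    extendFin k x j = 0 := by
  unfold extendFin
  rw [dif_neg (by omega)]

lemma extendFin_of_lt {k : ℕ} (x : Fin k → ℝ) (i : Fin k) :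
    extendFin k x (i : ℕ) = x i := by
  unfold extendFin
  rw [dif_pos i.isLt]

variable {f} in
lemma f_integrable (hfmeas : ∀ j, Measurable (f j)) (hfint : ∀ j, (∫ x, f j x) = 1) (j : ℕ) :
    Integrable (f j) := by
  by_contra h
  have := hfint j
  rw [integral_undef h] at this
  exact one_ne_zero this.symm

variable {f} in
lemma Wnorm_le_one (hfmeas : ∀ j, Measurable (f j)) (hfpos : ∀ j x, 0 ≤ f j x)
    (hfint : ∀ j, (∫ x, f j x) = 1) (j : ℕ) : Wnorm n f Y j ≤ 1 := by
  have h1 : Wnorm n f Y j ≤ ∫⁻ x, ENNReal.ofReal (f j x) := by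
    refine lintegral_mono fun x => ENNReal.ofReal_le_ofReal ?_
    refine mul_le_of_le_one_right (hfpos j x) (Real.exp_le_one_iff.mpr ?_)
    have h2 : (0:ℝ) ≤ (x - Y j)^2 := sq_nonneg _
    have h3 : (0:ℝ) ≤ (n:ℝ) := Nat.cast_nonneg n
    nlinarith
  have h2 : ∫⁻ x, ENNReal.ofReal (f j x) = 1 := by
    rw [← ofReal_integral_eq_lintegral_ofReal (f_integrable hfmeas hfint j)
      (Filter.Eventually.of_forall (hfpos j)), hfint j, ENNReal.ofReal_one]
  exact h2 ▸ h1

lemma tildeDens_meas (hfmeas : ∀ j, Measurable (f j)) (j : ℕ) :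
    Measurable fun x => ENNReal.ofReal (f j x * Real.exp (-(n : ℝ) / 2 * (x - Y j) ^ 2)) := by
  refine Measurable.ennreal_ofReal ?_
  exact (hfmeas j).mul (((measurable_id.sub_const (Y j)).pow_const 2).const_mul
    (-(n:ℝ)/2)).exp

variable {n f Y} in
lemma tildeF_prob (hfmeas : ∀ j, Measurable (f j)) (hfpos : ∀ j x, 0 ≤ f j x)
    (hfint : ∀ j, (∫ x, f j x) = 1) (hW : ∀ j, 0 < Wnorm n f Y j) (j : ℕ) :
    IsProbabilityMeasure (tildeF n f Y j) := by
  constructor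
  rw [tildeF, Measure.smul_apply, withDensity_apply _ MeasurableSet.univ,
    Measure.restrict_univ, smul_eq_mul]
  have : ∫⁻ x, ENNReal.ofReal (f j x * Real.exp (-(n : ℝ) / 2 * (x - Y j) ^ 2)) = Wnorm n f Y j := rfl
  rw [this, ENNReal.inv_mul_cancel (hW j).ne'
    (((Wnorm_le_one n Y hfmeas hfpos hfint j)).trans_lt ENNReal.one_lt_top).ne]

lemma tildeF_ac (j : ℕ) : tildeF n f Y j ≪ volume := by
  rw [tildeF]
  intro A hA
  rw [Measure.smul_apply, withDensity_apply' _ A, smul_eq_mul]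
  rw [Measure.restrict_eq_zero.mpr hA]
  simp

/-- the empirical Bayes coordinate measure for dimension k -/
def ebM (k : ℕ) : Measure (ℕ → ℝ) :=
  Measure.map (extendFin k) (Measure.pi fun i : Fin k => tildeF n f Y (i : ℕ))

variable {n f Y} in
lemma ebM_prob (hfmeas : ∀ j, Measurable (f j)) (hfpos : ∀ j x, 0 ≤ f j x)
    (hfint : ∀ j, (∫ x, f j x) = 1) (hW : ∀ j, 0 < Wnorm n f Y j) (k : ℕ) :
    IsProbabilityMeasure (ebM n f Y k) := by
  haveI : ∀ i : Fin k, IsProbabilityMeasure (tildeF n f Y (i : ℕ)) :=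
    fun i => tildeF_prob hfmeas hfpos hfint hW i
  exact Measure.isProbabilityMeasure_map (measurable_extendFin k).aemeasurable


/-- coordinate likelihood density -/
def gdens (j : ℕ) : ℝ → ℝ≥0∞ :=
  fun t => ENNReal.ofReal (Real.exp ((n:ℝ) * (t * Y j) - (n:ℝ)/2 * t^2))

lemma gdens_meas (j : ℕ) : Measurable (gdens n Y j) :=
  (((measurable_id.mul_const (Y j)).const_mul (n:ℝ)).sub
    ((measurable_id.pow_const 2).const_mul ((n:ℝ)/2))).exp.ennreal_ofReal

variable {n f Y} in
lemma coord_eq (hfmeas : ∀ j, Measurable (f j)) (hfpos : ∀ j x, 0 ≤ f j x)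
    (hfint : ∀ j, (∫ x, f j x) = 1) (hW : ∀ j, 0 < Wnorm n f Y j) (j : ℕ) :
    (volume.withDensity fun x => ENNReal.ofReal (f j x)).withDensity (gdens n Y j)
    = (Wnorm n f Y j * ENNReal.ofReal (Real.exp ((n:ℝ) * Y j ^ 2 / 2))) • tildeF n f Y j := by
  have hWne : Wnorm n f Y j ≠ ⊤ :=
    ((Wnorm_le_one n Y hfmeas hfpos hfint j).trans_lt ENNReal.one_lt_top).ne
  rw [← withDensity_mul _ (hfmeas j).ennreal_ofReal (gdens_meas n Y j)]
  have hfun : ((fun x => ENNReal.ofReal (f j x)) * gdens n Y j)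
      = fun x => ENNReal.ofReal (Real.exp ((n:ℝ) * Y j^2/2)) *
          ENNReal.ofReal (f j x * Real.exp (-(n:ℝ)/2 * (x - Y j)^2)) := by
    funext x
    simp only [Pi.mul_apply, gdens]
    rw [← ENNReal.ofReal_mul (hfpos j x), ← ENNReal.ofReal_mul (Real.exp_pos _).le]
    congr 1
    have hexp : Real.exp ((n:ℝ) * (x * Y j) - (n:ℝ)/2 * x^2)
        = Real.exp ((n:ℝ) * Y j^2/2) * Real.exp (-(n:ℝ)/2 * (x - Y j)^2) := by
      rw [← Real.exp_add]; congr 1; ring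
    rw [hexp]; ring
  rw [hfun]
  rw [show (fun x => ENNReal.ofReal (Real.exp ((n:ℝ) * Y j^2/2)) *
        ENNReal.ofReal (f j x * Real.exp (-(n:ℝ)/2 * (x - Y j)^2)))
      = (ENNReal.ofReal (Real.exp ((n:ℝ) * Y j^2/2)) •
        fun x => ENNReal.ofReal (f j x * Real.exp (-(n:ℝ)/2 * (x - Y j)^2))) from rfl]
  rw [withDensity_smul _ (tildeDens_meas n f Y hfmeas j)]
  have hten : volume.withDensity
      (fun x => ENNReal.ofReal (f j x * Real.exp (-(n:ℝ)/2 * (x - Y j)^2)))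
      = Wnorm n f Y j • tildeF n f Y j := by
    rw [tildeF, smul_smul, ENNReal.mul_inv_cancel (hW j).ne' hWne, one_smul]
  rw [hten, smul_smul, mul_comm]


variable {n f Y} in
lemma component_eq (hfmeas : ∀ j, Measurable (f j)) (hfpos : ∀ j x, 0 ≤ f j x)
    (hfint : ∀ j, (∫ x, f j x) = 1) (hW : ∀ j, 0 < Wnorm n f Y j) (k : ℕ) :
    (Measure.map (extendFin k) (Measure.pi fun j : Fin k =>
        volume.withDensity fun x => ENNReal.ofReal (f (j : ℕ) x))).withDensity
      (fun θ => gaussLik n θ Y)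
    = (∏ j ∈ Finset.range k, (Wnorm n f Y j *
        ENNReal.ofReal (Real.exp ((n : ℝ) * Y j ^ 2 / 2)))) • ebM n f Y k := by
  set ν : Fin k → Measure ℝ :=
    fun j => volume.withDensity fun x => ENNReal.ofReal (f (j : ℕ) x) with hν
  set F' : (ℕ → ℝ) → ℝ≥0∞ := fun θ => ∏ j ∈ Finset.range k,
    ENNReal.ofReal (Real.exp ((n:ℝ) * (θ j * Y j) - (n:ℝ)/2 * θ j ^ 2)) with hF'
  have hF'meas : Measurable F' := by
    apply Finset.measurable_prod
    intro j _
    exact (Measurable.exp (by fun_prop)).ennreal_ofReal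
  have hE : MeasurableSet {θ : ℕ → ℝ | ∀ j, k ≤ j → θ j = 0} := by
    have hEq : {θ : ℕ → ℝ | ∀ j, k ≤ j → θ j = 0}
        = ⋂ (j : ℕ) (_ : k ≤ j), (fun θ : ℕ → ℝ => θ j) ⁻¹' {0} := by
      ext θ; simp
    rw [hEq]
    exact MeasurableSet.iInter fun j => MeasurableSet.iInter fun _ =>
      (measurable_pi_apply j) (measurableSet_singleton 0)
  have hmem : {θ : ℕ → ℝ | ∀ j, k ≤ j → θ j = 0}
      ∈ ae (Measure.map (extendFin k) (Measure.pi ν)) := by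
    rw [mem_ae_iff, Measure.map_apply (measurable_extendFin k) hE.compl]
    have hpre : extendFin k ⁻¹' {θ : ℕ → ℝ | ∀ j, k ≤ j → θ j = 0}ᶜ = ∅ := by
      ext x
      simp only [Set.mem_preimage, Set.mem_compl_iff, Set.mem_setOf_eq,
        Set.mem_empty_iff_false, iff_false, not_not]
      exact fun j hj => extendFin_of_le x hj
    rw [hpre, measure_empty]
  have hae : (fun θ => gaussLik n θ Y) =ᵐ[Measure.map (extendFin k) (Measure.pi ν)] F' := by
    filter_upwards [hmem] with θ hθ
    rw [gaussLik]
    have ht1 : ∑' j, θ j * Y j = ∑ j ∈ Finset.range k, θ j * Y j :=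
      tsum_eq_sum fun j hj => by rw [hθ j (by simpa using hj), zero_mul]
    have ht2 : ∑' j, θ j ^ 2 = ∑ j ∈ Finset.range k, θ j ^ 2 :=
      tsum_eq_sum fun j hj => by rw [hθ j (by simpa using hj)]; ring
    rw [ht1, ht2, hF', Finset.mul_sum, Finset.mul_sum, ← Finset.sum_sub_distrib,
      Real.exp_sum, ENNReal.ofReal_prod_of_nonneg (fun j _ => (Real.exp_pos _).le)]
  rw [withDensity_congr_ae hae, map_withDensity' (Measure.pi ν) (measurable_extendFin k) hF'meas]
  have hcomp : (fun x : Fin k → ℝ => F' (extendFin k x))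
      = fun x => ∏ i : Fin k, gdens n Y (i:ℕ) (x i) := by
    funext x
    rw [hF']
    dsimp only
    rw [← Fin.prod_univ_eq_prod_range (fun j => ENNReal.ofReal
      (Real.exp ((n:ℝ) * (extendFin k x j * Y j) - (n:ℝ)/2 * (extendFin k x j) ^ 2))) k]
    exact Finset.prod_congr rfl fun i _ => by rw [extendFin_of_lt x i]; rfl
  rw [hcomp]
  haveI hfin1 : ∀ i : Fin k, IsFiniteMeasure (ν i) := fun i => by
    constructor
    rw [hν]
    dsimp only
    rw [withDensity_apply _ MeasurableSet.univ, Measure.restrict_univ,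
      ← ofReal_integral_eq_lintegral_ofReal (f_integrable hfmeas hfint (i:ℕ))
        (Filter.Eventually.of_forall (hfpos (i:ℕ)))]
    exact ENNReal.ofReal_lt_top
  haveI hsf : ∀ i : Fin k, SigmaFinite (ν i) := fun i =>
    @IsFiniteMeasure.toSigmaFinite _ _ (ν i) (hfin1 i)
  have hcoord : ∀ i : Fin k, (ν i).withDensity (gdens n Y (i:ℕ))
      = (Wnorm n f Y (i:ℕ) * ENNReal.ofReal (Real.exp ((n:ℝ) * Y (i:ℕ) ^ 2 / 2))) •
        tildeF n f Y (i:ℕ) := fun i => coord_eq hfmeas hfpos hfint hW (i:ℕ)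
  have hcne : ∀ i : Fin k, (Wnorm n f Y (i:ℕ) *
      ENNReal.ofReal (Real.exp ((n:ℝ) * Y (i:ℕ) ^ 2 / 2))) ≠ ⊤ := fun i =>
    (ENNReal.mul_lt_top
      ((Wnorm_le_one n Y hfmeas hfpos hfint (i:ℕ)).trans_lt ENNReal.one_lt_top)
      ENNReal.ofReal_lt_top).ne
  haveI := fun i : Fin k => tildeF_prob hfmeas hfpos hfint hW (i : ℕ)
  have hsf2 : ∀ i : Fin k, SigmaFinite ((ν i).withDensity (gdens n Y (i:ℕ))) := fun i => by
    rw [hcoord i]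
    haveI : IsFiniteMeasure ((Wnorm n f Y (i:ℕ) *
        ENNReal.ofReal (Real.exp ((n:ℝ) * Y (i:ℕ) ^ 2 / 2))) • tildeF n f Y (i:ℕ)) := by
      constructor
      rw [Measure.smul_apply, smul_eq_mul]
      exact ENNReal.mul_lt_top (hcne i).lt_top (measure_lt_top _ _)
    infer_instance
  rw [pi_withDensity ν _ (fun i => gdens_meas n Y (i:ℕ)) hsf2]
  have hpieq : (fun i : Fin k => (ν i).withDensity (gdens n Y (i:ℕ)))
      = fun i : Fin k => (Wnorm n f Y (i:ℕ) *
          ENNReal.ofReal (Real.exp ((n:ℝ) * Y (i:ℕ) ^ 2 / 2))) • tildeF n f Y (i:ℕ) :=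
    funext hcoord
  rw [hpieq, pi_smul' _ _ hcne, Measure.map_smul]
  congr 1
  exact Fin.prod_univ_eq_prod_range
    (fun j => Wnorm n f Y j * ENNReal.ofReal (Real.exp ((n:ℝ) * Y j ^ 2 / 2))) k


variable {n π' f Y} in
lemma prior_withDensity (hfmeas : ∀ j, Measurable (f j)) (hfpos : ∀ j x, 0 ≤ f j x)
    (hfint : ∀ j, (∫ x, f j x) = 1) (hW : ∀ j, 0 < Wnorm n f Y j) :
    (sievePrior π' f).withDensity (fun θ => gaussLik n θ Y)
    = Measure.sum (fun k => dimWeight n π' f Y k • ebM n f Y k) := by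
  rw [sievePrior, withDensity_sum]
  congr 1
  funext k
  rw [withDensity_smul_measure, component_eq hfmeas hfpos hfint hW k, dimWeight, smul_smul]

variable {n π' f Y} in
lemma lint_gaussLik (hfmeas : ∀ j, Measurable (f j)) (hfpos : ∀ j x, 0 ≤ f j x)
    (hfint : ∀ j, (∫ x, f j x) = 1) (hW : ∀ j, 0 < Wnorm n f Y j) :
    ∫⁻ θ, gaussLik n θ Y ∂(sievePrior π' f) = ∑' m, dimWeight n π' f Y m := by
  have h1 : ∫⁻ θ, gaussLik n θ Y ∂(sievePrior π' f)
      = (sievePrior π' f).withDensity (fun θ => gaussLik n θ Y) Set.univ := by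
    rw [withDensity_apply _ MeasurableSet.univ, Measure.restrict_univ]
  rw [h1, prior_withDensity hfmeas hfpos hfint hW, Measure.sum_apply _ MeasurableSet.univ]
  refine tsum_congr fun m => ?_
  haveI := ebM_prob hfmeas hfpos hfint hW m
  rw [Measure.smul_apply, measure_univ, smul_eq_mul, mul_one]

variable {n π' f Y} in
lemma post_rep (hfmeas : ∀ j, Measurable (f j)) (hfpos : ∀ j x, 0 ≤ f j x)
    (hfint : ∀ j, (∫ x, f j x) = 1) (hW : ∀ j, 0 < Wnorm n f Y j) :
    gaussPosterior n π' f Y = (∑' m, dimWeight n π' f Y m)⁻¹ •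
      Measure.sum (fun k => dimWeight n π' f Y k • ebM n f Y k) := by
  rw [gaussPosterior, _root_.posterior, lint_gaussLik hfmeas hfpos hfint hW,
    prior_withDensity hfmeas hfpos hfint hW]

/-- the slice of dimension exactly k -/
def Sset (k : ℕ) : Set (ℕ → ℝ) :=
  {θ | (∀ j, k ≤ j → θ j = 0) ∧ ∀ m, k = m + 1 → θ m ≠ 0}

lemma Sset_meas (k : ℕ) : MeasurableSet (Sset k) := by
  have hEq : Sset k = (⋂ (j : ℕ) (_ : k ≤ j), (fun θ : ℕ → ℝ => θ j) ⁻¹' {0}) ∩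
      ⋂ (m : ℕ) (_ : k = m + 1), ((fun θ : ℕ → ℝ => θ m) ⁻¹' {0})ᶜ := by
    ext θ
    simp [Sset]
  rw [hEq]
  refine MeasurableSet.inter ?_ ?_
  · exact MeasurableSet.iInter fun j => MeasurableSet.iInter fun _ =>
      (measurable_pi_apply j) (measurableSet_singleton 0)
  · exact MeasurableSet.iInter fun m => MeasurableSet.iInter fun _ =>
      ((measurable_pi_apply m) (measurableSet_singleton 0)).compl

variable {n f Y} in
lemma ebM_Sset_zero (hfmeas : ∀ j, Measurable (f j)) (hfpos : ∀ j x, 0 ≤ f j x)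
    (hfint : ∀ j, (∫ x, f j x) = 1) (hW : ∀ j, 0 < Wnorm n f Y j)
    {m k : ℕ} (hmk : m ≠ k) : ebM n f Y m (Sset k) = 0 := by
  haveI := fun i : Fin m => tildeF_prob hfmeas hfpos hfint hW (i : ℕ)
  rw [ebM, Measure.map_apply (measurable_extendFin m) (Sset_meas k)]
  rcases lt_or_gt_of_ne hmk with h | h
  · have hpre : extendFin m ⁻¹' Sset k = ∅ := by
      ext x
      simp only [Set.mem_preimage, Sset, Set.mem_setOf_eq, Set.mem_empty_iff_false, iff_false,
        not_and, not_forall]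
      intro h1
      obtain ⟨K, rfl⟩ : ∃ K, k = K + 1 := ⟨k - 1, by omega⟩
      exact ⟨K, rfl, fun hne => hne (extendFin_of_le x (by omega))⟩
    rw [hpre, measure_empty]
  · have hsub : extendFin m ⁻¹' Sset k ⊆ (fun x : Fin m → ℝ => x ⟨k, h⟩) ⁻¹' {0} := by
      intro x hx
      have h1 := hx.1 k le_rfl
      have h2 : extendFin m x ((⟨k, h⟩ : Fin m) : ℕ) = x ⟨k, h⟩ := extendFin_of_lt x ⟨k, h⟩
      simp only [Set.mem_preimage, Set.mem_singleton_iff]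
      rw [← h2]
      exact h1
    refine measure_mono_null hsub ?_
    exact Measure.pi_eval_preimage_null _ ((tildeF_ac n f Y k) (by simp))

lemma mapExtend_compl_Sset (k : ℕ) (ν : Fin k → Measure ℝ)
    [hp : ∀ i, IsProbabilityMeasure (ν i)] (hac : ∀ i, ν i ≪ volume) :
    Measure.map (extendFin k) (Measure.pi ν) (Sset k)ᶜ = 0 := by
  rw [Measure.map_apply (measurable_extendFin k) (Sset_meas k).compl]
  by_cases hk : k = 0
  · subst hk
    have hpre : extendFin 0 ⁻¹' (Sset 0)ᶜ = ∅ := by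
      ext x
      simp only [Set.mem_preimage, Set.mem_compl_iff, Set.mem_empty_iff_false, iff_false, not_not]
      exact ⟨fun j _ => extendFin_of_le x (Nat.zero_le j), fun m hm => absurd hm (by omega)⟩
    rw [hpre, measure_empty]
  · have hKlt : k - 1 < k := by omega
    have hsub : extendFin k ⁻¹' (Sset k)ᶜ ⊆
        (fun x : Fin k → ℝ => x ⟨k - 1, hKlt⟩) ⁻¹' {0} := by
      intro x hx
      simp only [Set.mem_preimage, Set.mem_compl_iff, Sset, Set.mem_setOf_eq, not_and,
        not_forall] at hx
      obtain ⟨m, hm, hxm⟩ := hx fun j hj => extendFin_of_le x hj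
      rw [not_not] at hxm
      obtain rfl : m = k - 1 := by omega
      have h2 : extendFin k x ((⟨k - 1, hKlt⟩ : Fin k) : ℕ)
          = x ⟨k - 1, hKlt⟩ := extendFin_of_lt x _
      simp only [Set.mem_preimage, Set.mem_singleton_iff]
      rw [← h2]
      exact hxm
    refine measure_mono_null hsub ?_
    exact Measure.pi_eval_preimage_null _ ((hac _) (by simp))

end Model

/-- Theorem 5.3: the empirical Bayes posterior is exactly the variational posterior
with respect to the class S_EB. -/
theorem empirical_Bayes_is_variational_posterior
    (n : ℕ) (hn : 1 ≤ n) (π' : ℕ → ℝ≥0∞) (f : ℕ → ℝ → ℝ)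
    (hπ : (∑' k, π' k) = 1)
    (hfmeas : ∀ j, Measurable (f j)) (hfpos : ∀ j x, 0 ≤ f j x)
    (hfint : ∀ j, (∫ x, f j x) = 1)
    (Y : ℕ → ℝ)
    (hW : ∀ j, 0 < Wnorm n f Y j)
    -- k̂ = argmax_k π(k|Y)
    (khat : ℕ)
    (hargmax : ∀ k : ℕ, dimPost n π' f Y k ≤ dimPost n π' f Y khat)
    -- the empirical Bayes posterior: q_j = f̃_j for j ≤ k̂ and q_j = δ₀ for j > k̂
    (QEB : Measure (ℕ → ℝ))
    (hQEB : QEB = Measure.map (extendFin khat)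
      (Measure.pi fun i : Fin khat => tildeF n f Y (i : ℕ))) :
    -- QEB belongs to S_EB and minimizes the KL divergence to the posterior over S_EB
    inSEB QEB ∧
      ∀ Q, inSEB Q →
        KLdiv QEB (gaussPosterior n π' f Y) ≤ KLdiv Q (gaussPosterior n π' f Y) := by
  classical
  -- abbreviations
  set w : ℕ → ℝ≥0∞ := dimWeight n π' f Y with hw
  set Z : ℝ≥0∞ := ∑' m, w m with hZdef
  haveI hPEB : IsProbabilityMeasure QEB := by
    rw [hQEB]
    exact ebM_prob hfmeas hfpos hfint hW khat
  have hQEBeb : QEB = ebM n f Y khat := hQEB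
  have hpost := post_rep hfmeas hfpos hfint hW (π' := π')
  refine ⟨⟨khat, fun i => tildeF n f Y (i : ℕ),
      fun i => tildeF_prob hfmeas hfpos hfint hW (i : ℕ),
      fun i => tildeF_ac n f Y (i : ℕ), hQEB⟩, ?_⟩
  intro Q hQ
  obtain ⟨kQ, νQ, hνprob, hνac, hQeq⟩ := hQ
  haveI := hνprob
  haveI hQprob : IsProbabilityMeasure Q := by
    rw [hQeq]
    exact Measure.isProbabilityMeasure_map (measurable_extendFin kQ).aemeasurable
  by_cases hZtop : Z = ⊤
  · -- normalizer infinite: posterior is the zero measure, both KL divergences are ⊤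
    have hpost0 : gaussPosterior n π' f Y = 0 := by
      rw [hpost, ← hZdef, hZtop, ENNReal.inv_top, zero_smul]
    have htop : ∀ (P : Measure (ℕ → ℝ)), IsProbabilityMeasure P → KLdiv P 0 = ⊤ := by
      intro P hP
      rw [KLdiv, if_neg]
      rintro ⟨hac, -⟩
      have h0 : P Set.univ = 0 := hac (by simp)
      rw [hP.measure_univ] at h0
      exact one_ne_zero h0
    rw [hpost0, htop Q hQprob, htop QEB hPEB]
  · -- normalizer finite
    have hwle : ∀ m, w m ≤ Z := fun m => ENNReal.le_tsum m
    have hwtop : ∀ m, w m ≠ ⊤ := fun m => ((hwle m).trans_lt (lt_top_iff_ne_top.mpr hZtop)).ne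
    have hwpos : ∀ m, π' m ≠ 0 → w m ≠ 0 := by
      intro m hm
      rw [hw, dimWeight]
      refine mul_ne_zero hm (Finset.prod_ne_zero_iff.mpr fun j _ => ?_)
      exact mul_ne_zero (hW j).ne' (by positivity)
    have hZ0 : Z ≠ 0 := by
      have hex : ∃ m, π' m ≠ 0 := by
        by_contra hcon
        push_neg at hcon
        rw [ENNReal.tsum_eq_zero.mpr hcon] at hπ
        exact one_ne_zero hπ.symm
      obtain ⟨m, hm⟩ := hex
      exact fun h => hwpos m hm (le_antisymm (h ▸ hwle m) zero_le)
    have hwmax : ∀ m, w m ≤ w khat := by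
      intro m
      have h1 := hargmax m
      rw [dimPost, dimPost] at h1
      calc w m = (w m / Z) * Z := (ENNReal.div_mul_cancel hZ0 hZtop).symm
        _ ≤ (w khat / Z) * Z := mul_le_mul_left h1 Z
        _ = w khat := ENNReal.div_mul_cancel hZ0 hZtop
    have hwkhat0 : w khat ≠ 0 := by
      obtain ⟨m, hm⟩ : ∃ m, π' m ≠ 0 := by
        by_contra hcon
        push_neg at hcon
        rw [ENNReal.tsum_eq_zero.mpr hcon] at hπ
        exact one_ne_zero hπ.symm
      exact fun h => hwpos m hm
        (le_antisymm (le_trans (hwmax m) h.le) zero_le)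
    have hcle : ∀ m, Z⁻¹ * w m ≤ 1 := by
      intro m
      calc Z⁻¹ * w m ≤ Z⁻¹ * Z := mul_le_mul_right (hwle m) _
        _ = 1 := ENNReal.inv_mul_cancel hZ0 hZtop
    have hctop : ∀ m, Z⁻¹ * w m ≠ ⊤ := fun m => ((hcle m).trans_lt ENNReal.one_lt_top).ne
    -- the posterior is a finite measure
    haveI hpostfin : IsFiniteMeasure (gaussPosterior n π' f Y) := by
      constructor
      rw [hpost, Measure.smul_apply, Measure.sum_apply _ MeasurableSet.univ, smul_eq_mul]
      have hsum : ∑' m, (w m • ebM n f Y m) Set.univ = Z := by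
        rw [hZdef]
        refine tsum_congr fun m => ?_
        haveI := ebM_prob hfmeas hfpos hfint hW m
        rw [Measure.smul_apply, measure_univ, smul_eq_mul, mul_one]
      rw [hsum, ← hZdef, ENNReal.inv_mul_cancel hZ0 hZtop]
      exact ENNReal.one_lt_top
    -- reduction: for any probability measure P living on the slice of dimension k,
    -- KL to the posterior equals KL to the k-th mixture component
    have hred : ∀ (P : Measure (ℕ → ℝ)) (k : ℕ), IsProbabilityMeasure P →
        P (Sset k)ᶜ = 0 →
        KLdiv P (gaussPosterior n π' f Y) = KLdiv P ((Z⁻¹ * w k) • ebM n f Y k) := by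
      intro P k hP hPS
      haveI := hP
      haveI := ebM_prob hfmeas hfpos hfint hW k
      haveI : IsFiniteMeasure ((Z⁻¹ * w k) • ebM n f Y k) := by
        constructor
        rw [Measure.smul_apply, smul_eq_mul, measure_univ, mul_one]
        exact (hctop k).lt_top
      refine KLdiv_congr_restrict P _ _ (Sset_meas k) hPS ?_
      rw [hpost, Measure.restrict_smul, Measure.restrict_smul,
        restrict_sum' _ (Sset_meas k)]
      have hsingle : Measure.sum (fun m => (w m • ebM n f Y m).restrict (Sset k))
          = (w k • ebM n f Y k).restrict (Sset k) := by
        refine measure_sum_eq_single k fun m hm => ?_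
        rw [Measure.restrict_eq_zero, Measure.smul_apply,
          ebM_Sset_zero hfmeas hfpos hfint hW hm, smul_eq_mul, mul_zero]
      rw [hsingle, Measure.restrict_smul, smul_smul]
    -- KL of the empirical Bayes posterior
    have hQEBS : QEB (Sset khat)ᶜ = 0 := by
      rw [hQEBeb, ebM]
      haveI := fun i : Fin khat => tildeF_prob hfmeas hfpos hfint hW (i : ℕ)
      exact mapExtend_compl_Sset khat _ (fun i => tildeF_ac n f Y (i : ℕ))
    have hckhat0 : Z⁻¹ * w khat ≠ 0 :=
      mul_ne_zero (ENNReal.inv_ne_zero.mpr hZtop) hwkhat0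
    have hEB : KLdiv QEB (gaussPosterior n π' f Y)
        = ENNReal.ofReal (- Real.log (Z⁻¹ * w khat).toReal) := by
      rw [hred QEB khat hPEB hQEBS, hQEBeb]
      haveI := ebM_prob hfmeas hfpos hfint hW khat
      exact KLdiv_smul_self _ hckhat0 (hctop khat)
    -- KL of Q
    have hQS : Q (Sset kQ)ᶜ = 0 := by
      rw [hQeq]
      exact mapExtend_compl_Sset kQ νQ hνac
    rw [hEB, hred Q kQ hQprob hQS]
    by_cases hwkQ : w kQ = 0
    · rw [hwkQ, mul_zero, zero_smul, KLdiv, if_neg]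
      · exact le_top
      · rintro ⟨hac, -⟩
        have h0 : Q Set.univ = 0 := hac (by simp)
        rw [hQprob.measure_univ] at h0
        exact one_ne_zero h0
    · haveI := ebM_prob hfmeas hfpos hfint hW kQ
      have hckQ0 : Z⁻¹ * w kQ ≠ 0 := mul_ne_zero (ENNReal.inv_ne_zero.mpr hZtop) hwkQ
      rw [KLdiv_smul_right Q (ebM n f Y kQ) hckQ0 (hctop kQ)]
      split_ifs with h
      · obtain ⟨hac, hint⟩ := h
        have hgibbs := integral_llr_nonneg' Q (ebM n f Y kQ) hac hint
        apply ENNReal.ofReal_le_ofReal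
        have hle : Z⁻¹ * w kQ ≤ Z⁻¹ * w khat := mul_le_mul_right (hwmax kQ) _
        have hposQ : 0 < (Z⁻¹ * w kQ).toReal :=
          ENNReal.toReal_pos hckQ0 (hctop kQ)
        have hlog : Real.log (Z⁻¹ * w kQ).toReal ≤ Real.log (Z⁻¹ * w khat).toReal :=
          Real.log_le_log hposQ (ENNReal.toReal_mono (hctop khat) hle)
        linarith
      · exact le_top

end
end
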